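/- arXiv:2402.00057 — 2 statements merged into one kernel-verified Lean document; each statement's English description precedes it below -/
import Mathlib

section
/- The restricted k-multipartition function p_a^k(n) is a quasi-polynomial in n of degree rk - 1 with period D = lcm(a_1,...,a_r): there exist functions d_m : ℕ → ℚ with d_m(n + D) = d_m(n) for all n, 0 ≤ m ≤ rk-1, such that p_a^k(n) = Σ_{m=0}^{rk-1} d_m(n) n^m for all n ≥ 0, and d_{rk-1} is not identically zero. -/
open Finset Polynomial Function
open scoped fwdDiff

namespace QP8

/-! ### Finite difference lemmas -/

lemma fwd_shift (c a : ℕ) (f : ℕ → ℚ) :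
    Δ_[c] (fun n => f (n + a)) = fun n => Δ_[c] f (n + a) := by
  funext n
  simp only [fwdDiff]
  rw [Nat.add_right_comm]

lemma fwd_iter_shift (c a s : ℕ) (f : ℕ → ℚ) :
    (Δ_[c])^[s] (fun n => f (n + a)) = fun n => (Δ_[c])^[s] f (n + a) := by
  induction s generalizing f with
  | zero => simp
  | succ s ih =>
      rw [Function.iterate_succ_apply, Function.iterate_succ_apply, fwd_shift, ih]

lemma fwd_mul_eq_sum (b q : ℕ) (f : ℕ → ℚ) :
    Δ_[b * q] f = fun n => ∑ j ∈ range q, Δ_[b] f (n + b * j) := by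
  induction q with
  | zero => funext n; simp [fwdDiff]
  | succ q ih =>
      funext n
      have h1 : Δ_[b * (q + 1)] f n = Δ_[b] f (n + b * q) + Δ_[b * q] f n := by
        simp only [fwdDiff]
        have h2 : n + b * (q + 1) = n + b * q + b := by ring
        rw [h2]; ring
      rw [h1, ih, Finset.sum_range_succ]
      ring

lemma fwd_zero_of_dvd {b D : ℕ} (h : b ∣ D) {f : ℕ → ℚ} (hf : Δ_[b] f = 0) : Δ_[D] f = 0 := by
  obtain ⟨q, rfl⟩ := h
  rw [fwd_mul_eq_sum]
  funext n
  simp [hf]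

lemma eq_zero_of_fwd_iter_one {s : ℕ} {u : ℕ → ℚ} (h : (Δ_[1])^[s] u = 0)
    (h0 : ∀ t, t < s → u t = 0) : u = 0 := by
  induction s generalizing u with
  | zero => simpa using h
  | succ s ih =>
      have hv : (Δ_[1])^[s] (Δ_[1] u) = 0 := by rwa [← Function.iterate_succ_apply]
      have hv0 : ∀ t, t < s → Δ_[1] u t = 0 := fun t ht => by
        simp [fwdDiff, h0 t (by omega), h0 (t + 1) (by omega)]
      have hΔ := ih hv hv0
      funext t
      induction t with
      | zero => simpa using h0 0 (by omega)
      | succ t iht =>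
          have h3 := congrFun hΔ t
          simp only [fwdDiff, Pi.zero_apply] at h3 iht ⊢
          linarith

/-! ### Polynomial lemmas -/

lemma coeff_comp_X_add_C (p : ℚ[X]) (β : ℚ) (m : ℕ) (hm : p.degree ≤ (m : ℕ)) :
    (p.comp (X + C β)).coeff m = p.coeff m := by
  have hd : p.natDegree ≤ m := natDegree_le_iff_degree_le.mpr hm
  rw [comp_eq_sum_left, Polynomial.sum_def, Polynomial.finset_sum_coeff]
  have key : ∀ i ∈ p.support, i ≠ m → (C (p.coeff i) * (X + C β) ^ i).coeff m = 0 := by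
    intro i hi hne
    have hi' : i < m :=
      lt_of_le_of_ne (le_trans (Polynomial.le_natDegree_of_mem_supp i hi) hd) hne
    rw [Polynomial.coeff_C_mul, Polynomial.coeff_X_add_C_pow]
    simp [Nat.choose_eq_zero_of_lt hi']
  rw [Finset.sum_eq_single m key (fun hm' => by
    rw [Polynomial.notMem_support_iff.mp hm']; simp)]
  rw [Polynomial.coeff_C_mul, Polynomial.coeff_X_add_C_pow]
  simp

lemma degree_comp_sub_lt (p : ℚ[X]) (β : ℚ) (s : ℕ) (hp : p.degree < ((s + 1 : ℕ) : WithBot ℕ)) :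
    (p.comp (X + C β) - p).degree < (s : ℕ) := by
  rw [Polynomial.degree_lt_iff_coeff_zero]
  intro m hmge
  have hdm : p.degree ≤ (m : ℕ) := by
    rw [Polynomial.degree_le_iff_coeff_zero]
    intro j hj
    rw [Polynomial.degree_lt_iff_coeff_zero] at hp
    refine hp j ?_
    have : (m : WithBot ℕ) < (j : ℕ) := hj
    rw [Nat.cast_lt] at this
    exact_mod_cast by omega
  rw [Polynomial.coeff_sub, coeff_comp_X_add_C p β m hdm, sub_self]

lemma fwd_iter_poly (s : ℕ) (p : ℚ[X]) (hp : p.degree < (s : ℕ)) (α β : ℚ) :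
    (Δ_[1])^[s] (fun t : ℕ => p.eval (α + β * t)) = 0 := by
  induction s generalizing p with
  | zero =>
      have hp0 : p = 0 := by
        rw [← Polynomial.degree_eq_bot]
        simpa using hp
      subst hp0
      funext t
      simp
  | succ s ih =>
      rw [Function.iterate_succ_apply]
      have hstep : Δ_[1] (fun t : ℕ => p.eval (α + β * t))
          = fun t : ℕ => (p.comp (X + C β) - p).eval (α + β * t) := by
        funext t
        simp only [fwdDiff, Polynomial.eval_sub, Polynomial.eval_comp, Polynomial.eval_add,
          Polynomial.eval_X, Polynomial.eval_C]
        push_cast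
        ring_nf
      rw [hstep]
      exact ih _ (degree_comp_sub_lt p β s hp)

lemma fwd_iter_progression (D c s : ℕ) (f : ℕ → ℚ) (hf : (Δ_[D])^[s] f = 0) :
    (Δ_[1])^[s] (fun t : ℕ => f (c + D * t)) = 0 := by
  have key : ∀ (s : ℕ) (f : ℕ → ℚ),
      (Δ_[1])^[s] (fun t => f (c + D * t)) = fun t => ((Δ_[D])^[s] f) (c + D * t) := by
    intro s
    induction s with
    | zero => intro f; simp
    | succ s ih =>
        intro f
        rw [Function.iterate_succ_apply, Function.iterate_succ_apply]
        have h1 : Δ_[1] (fun t => f (c + D * t)) = fun t => (Δ_[D] f) (c + D * t) := by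
          funext t
          simp only [fwdDiff]
          have h2 : c + D * (t + 1) = c + D * t + D := by ring
          rw [h2]
        rw [h1, ih]
  rw [key s f, hf]
  funext t; simp

/-! ### Counting solutions -/

def sols (s : ℕ) (b : Fin s → ℕ) (n : ℕ) : Type := {y : Fin s → ℕ // ∑ i, b i * y i = n}

lemma sols_finite {s : ℕ} {b : Fin s → ℕ} (hb : ∀ i, 0 < b i) (n : ℕ) : Finite (sols s b n) := by
  apply Finite.of_injective (fun y : sols s b n => fun i : Fin s => (⟨y.1 i, by
    have h1 : b i * y.1 i ≤ ∑ j, b j * y.1 j :=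
      Finset.single_le_sum (f := fun j => b j * y.1 j) (fun j _ => Nat.zero_le _)
        (Finset.mem_univ i)
    rw [y.2] at h1
    have h2 : y.1 i ≤ b i * y.1 i := Nat.le_mul_of_pos_left _ (hb i)
    omega⟩ : Fin (n + 1)))
  intro y z h
  apply Subtype.ext
  funext i
  exact congrArg Fin.val (congrFun h i)

noncomputable def cnt (s : ℕ) (b : Fin s → ℕ) (n : ℕ) : ℚ := Nat.card (sols s b n)

def oneStep {b : Fin 1 → ℕ} (hb : 0 < b 0) (n : ℕ) :
    sols 1 b n ≃ sols 1 b (n + b 0) where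
  toFun y := ⟨fun _ => y.1 0 + 1, by
    have h1 : b 0 * y.1 0 = n := by simpa using y.2
    simp only [Fin.sum_univ_one, Nat.mul_succ]
    rw [h1]⟩
  invFun z := ⟨fun _ => z.1 0 - 1, by
    have h1 : b 0 * z.1 0 = n + b 0 := by simpa using z.2
    have h2 : z.1 0 ≠ 0 := by
      intro h0; rw [h0, Nat.mul_zero] at h1; omega
    obtain ⟨m, hm⟩ := Nat.exists_eq_succ_of_ne_zero h2
    rw [hm, Nat.mul_succ] at h1
    simp only [Fin.sum_univ_one, hm, Nat.succ_sub_one]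
    omega⟩
  left_inv y := by
    apply Subtype.ext
    funext i
    have hi : i = 0 := Subsingleton.elim _ _
    simp [hi]
  right_inv z := by
    apply Subtype.ext
    funext i
    have hi : i = 0 := Subsingleton.elim _ _
    have h1 : b 0 * z.1 0 = n + b 0 := by simpa using z.2
    have h2 : z.1 0 ≠ 0 := by
      intro h0; rw [h0, Nat.mul_zero] at h1; omega
    simp only [hi]
    omega

lemma cnt_one_fwd {b : Fin 1 → ℕ} (hb : 0 < b 0) : Δ_[b 0] (cnt 1 b) = 0 := by
  funext n
  show cnt 1 b (n + b 0) - cnt 1 b n = (0 : ℕ → ℚ) n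
  unfold cnt
  rw [Nat.card_congr (oneStep hb n)]
  simp

def splitMap {s : ℕ} (b : Fin (s + 1) → ℕ) (n : ℕ)
    (p : sols (s + 1) b n ⊕ sols s (fun i => b i.succ) (n + b 0)) :
    sols (s + 1) b (n + b 0) :=
  match p with
  | Sum.inl y => ⟨Fin.cons (y.1 0 + 1) (Fin.tail y.1), by
      have h1 : b 0 * y.1 0 + ∑ i : Fin s, b i.succ * y.1 i.succ = n := by
        simpa [Fin.sum_univ_succ] using y.2
      simp only [Fin.sum_univ_succ, Fin.cons_zero, Fin.cons_succ, Fin.tail, Nat.mul_succ]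
      linarith⟩
  | Sum.inr z => ⟨Fin.cons 0 z.1, by
      have h1 : ∑ i : Fin s, b i.succ * z.1 i = n + b 0 := z.2
      simp only [Fin.sum_univ_succ, Fin.cons_zero, Fin.cons_succ, Nat.mul_zero, zero_add]
      exact h1⟩

@[simp] lemma splitMap_inl_val {s : ℕ} (b : Fin (s + 1) → ℕ) (n : ℕ) (y : sols (s + 1) b n) :
    (splitMap b n (Sum.inl y)).1 = Fin.cons (y.1 0 + 1) (Fin.tail y.1) := rfl

@[simp] lemma splitMap_inr_val {s : ℕ} (b : Fin (s + 1) → ℕ) (n : ℕ)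
    (z : sols s (fun i => b i.succ) (n + b 0)) :
    (splitMap b n (Sum.inr z)).1 = Fin.cons 0 z.1 := rfl

lemma splitMap_bijective {s : ℕ} (b : Fin (s + 1) → ℕ) (n : ℕ) :
    Function.Bijective (splitMap b n) := by
  constructor
  · rintro (y | z) (y' | z') h <;>
      have h' := congrArg Subtype.val h <;>
      simp only [splitMap_inl_val, splitMap_inr_val] at h'
    · have h0 := congrFun h' 0
      simp only [Fin.cons_zero] at h0
      congr 1
      apply Subtype.ext
      funext i
      induction i using Fin.cases with
      | zero => omega
      | succ j =>
          have h2 := congrFun h' j.succ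
          simpa [Fin.cons_succ, Fin.tail] using h2
    · have h0 := congrFun h' 0
      simp [Fin.cons_zero] at h0
    · have h0 := congrFun h' 0
      simp [Fin.cons_zero] at h0
    · congr 1
      apply Subtype.ext
      funext i
      have h2 := congrFun h' i.succ
      simpa [Fin.cons_succ] using h2
  · rintro ⟨w, hw⟩
    have hw' : b 0 * w 0 + ∑ i : Fin s, b i.succ * w i.succ = n + b 0 := by
      simpa [Fin.sum_univ_succ] using hw
    rcases h0 : w 0 with _ | m
    · refine ⟨Sum.inr ⟨Fin.tail w, ?_⟩, ?_⟩
      · show ∑ i : Fin s, b i.succ * w i.succ = n + b 0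
        rw [h0, Nat.mul_zero] at hw'
        omega
      · apply Subtype.ext
        funext i
        induction i using Fin.cases with
        | zero => simp [splitMap, Fin.cons_zero, h0]
        | succ j => simp [splitMap, Fin.cons_succ, Fin.tail]
    · refine ⟨Sum.inl ⟨Fin.cons m (Fin.tail w), ?_⟩, ?_⟩
      · rw [h0, Nat.mul_succ] at hw'
        simp only [Fin.sum_univ_succ, Fin.cons_zero, Fin.cons_succ, Fin.tail]
        linarith
      · apply Subtype.ext
        funext i
        induction i using Fin.cases with
        | zero => simp [splitMap, Fin.cons_zero, Fin.tail_cons, h0]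
        | succ j => simp [splitMap, Fin.cons_succ, Fin.tail_cons, Fin.tail]

lemma cnt_succ {s : ℕ} (b : Fin (s + 1) → ℕ) (hb : ∀ i, 0 < b i) (n : ℕ) :
    cnt (s + 1) b (n + b 0) = cnt (s + 1) b n + cnt s (fun i => b i.succ) (n + b 0) := by
  haveI h1 := sols_finite hb n
  haveI h2 := sols_finite (b := fun i : Fin s => b i.succ) (fun i => hb i.succ) (n + b 0)
  unfold cnt
  rw [Nat.card_congr (Equiv.ofBijective _ (splitMap_bijective b n)).symm, Nat.card_sum]
  push_cast
  ring

lemma cnt_fwd_iter (D : ℕ) (s : ℕ) (hs : 1 ≤ s) :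
    ∀ b : Fin s → ℕ, (∀ i, 0 < b i) → (∀ i, b i ∣ D) →
      (Δ_[D])^[s] (cnt s b) = 0 := by
  induction s, hs using Nat.le_induction with
  | base =>
      intro b hb hbd
      simpa using fwd_zero_of_dvd (hbd 0) (cnt_one_fwd (hb 0))
  | succ s hs ih =>
      intro b hb hbd
      have hstep : Δ_[b 0] (cnt (s + 1) b) = fun n => cnt s (fun i => b i.succ) (n + b 0) := by
        funext n
        have h3 := cnt_succ b hb n
        simp only [fwdDiff]
        linarith
      obtain ⟨q, hq⟩ := hbd 0
      have hD : Δ_[D] (cnt (s + 1) b) =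
          ∑ j ∈ range q, fun n => cnt s (fun i => b i.succ) (n + (b 0 * j + b 0)) := by
        rw [hq, fwd_mul_eq_sum]
        funext n
        rw [Finset.sum_apply]
        refine Finset.sum_congr rfl fun j _ => ?_
        rw [congrFun hstep (n + b 0 * j)]
        ring_nf
      rw [Function.iterate_succ_apply, hD, fwdDiff_iter_finset_sum]
      refine Finset.sum_eq_zero fun j _ => ?_
      rw [fwd_iter_shift, ih (fun i => b i.succ) (fun i => hb i.succ) (fun i => hbd i.succ)]
      funext m
      simp

/-! ### Quasi-polynomial extraction -/

lemma nodes_injOn (D c s : ℕ) (hD : 0 < D) :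
    Set.InjOn (fun t : ℕ => ((c + D * t : ℕ) : ℚ)) (range s) := by
  intro x _ y _ hxy
  simp only at hxy
  have h1 : (c + D * x : ℕ) = (c + D * y : ℕ) := Nat.cast_injective hxy
  have h2 : D * x = D * y := by omega
  exact Nat.eq_of_mul_eq_mul_left hD h2

noncomputable def interp (D s : ℕ) (f : ℕ → ℚ) (c : ℕ) : ℚ[X] :=
  Lagrange.interpolate (range s) (fun t : ℕ => ((c + D * t : ℕ) : ℚ)) (fun t => f (c + D * t))

lemma interp_degree (D s : ℕ) (hD : 0 < D) (f : ℕ → ℚ) (c : ℕ) :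
    (interp D s f c).degree < (s : ℕ) := by
  have h := Lagrange.degree_interpolate_lt (fun t => f (c + D * t)) (nodes_injOn D c s hD)
  rw [Finset.card_range] at h
  exact h

lemma interp_spec (D s : ℕ) (hD : 0 < D) (f : ℕ → ℚ)
    (hf : (Δ_[D])^[s] f = 0) (c : ℕ) (t : ℕ) :
    f (c + D * t) = (interp D s f c).eval ((c + D * t : ℕ) : ℚ) := by
  have hinj := nodes_injOn D c s hD
  have hdeg := interp_degree D s hD f c
  set P := interp D s f c with hP
  have hg : (Δ_[1])^[s] (fun t : ℕ => f (c + D * t)) = 0 := fwd_iter_progression D c s f hf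
  have hq : (Δ_[1])^[s] (fun t : ℕ => P.eval ((c + D * t : ℕ) : ℚ)) = 0 := by
    have hrw : (fun t : ℕ => P.eval ((c + D * t : ℕ) : ℚ))
        = fun t : ℕ => P.eval ((c : ℚ) + (D : ℚ) * t) := by
      funext t; push_cast; ring_nf
    rw [hrw]
    exact fwd_iter_poly s P hdeg _ _
  have hsub : (fun t : ℕ => f (c + D * t) - P.eval ((c + D * t : ℕ) : ℚ)) = 0 := by
    apply eq_zero_of_fwd_iter_one (s := s)
    · have hrw : (fun t : ℕ => f (c + D * t) - P.eval ((c + D * t : ℕ) : ℚ))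
          = (fun t : ℕ => f (c + D * t)) +
            (-1 : ℚ) • (fun t : ℕ => P.eval ((c + D * t : ℕ) : ℚ)) := by
        funext t; simp; ring
      rw [hrw, fwdDiff_iter_add, fwdDiff_iter_const_smul, hg, hq]
      funext u; simp
    · intro u hu
      have hnode := Lagrange.eval_interpolate_at_node (fun t => f (c + D * t)) hinj
        (Finset.mem_range.mpr hu)
      rw [sub_eq_zero]
      exact hnode.symm
  have h3 := congrFun hsub t
  simpa [sub_eq_zero] using h3

lemma exists_qp (D s : ℕ) (hD : 0 < D) (hs : 1 ≤ s) (f : ℕ → ℚ)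
    (hf : (Δ_[D])^[s] f = 0) :
    ∃ d : ℕ → ℕ → ℚ, (∀ m n, d m (n + D) = d m n) ∧
      (∀ n, f n = ∑ m ∈ range s, d m n * (n : ℚ) ^ m) ∧
      (∀ m n, d m n = d m (n % D)) := by
  refine ⟨fun m n => (interp D s f (n % D)).coeff m, ?_, ?_, ?_⟩
  · intro m n
    show (interp D s f ((n + D) % D)).coeff m = (interp D s f (n % D)).coeff m
    rw [Nat.add_mod_right]
  · intro n
    have key := interp_spec D s hD f hf (n % D) (n / D)
    have hn : n % D + D * (n / D) = n := Nat.mod_add_div n D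
    rw [hn] at key
    rw [key]
    have hdeg : (interp D s f (n % D)).natDegree < s := by
      rcases eq_or_ne (interp D s f (n % D)) 0 with h0 | h0
      · rw [h0]
        simpa using (show 0 < s from hs)
      · rw [Polynomial.natDegree_lt_iff_degree_lt h0]
        exact interp_degree D s hD f (n % D)
    exact Polynomial.eval_eq_sum_range' hdeg _
  · intro m n
    show (interp D s f (n % D)).coeff m = (interp D s f (n % D % D)).coeff m
    rw [Nat.mod_mod_of_dvd n dvd_rfl]

/-! ### Lower bound -/

lemma orig_finite (r k : ℕ) (a : Fin r → ℕ) (ha : ∀ i, 0 < a i) (n : ℕ) :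
    Finite {x : Fin r → Fin k → ℕ // ∑ i, ∑ j, a i * x i j = n} := by
  apply Finite.of_injective (fun x : {x : Fin r → Fin k → ℕ // ∑ i, ∑ j, a i * x i j = n} =>
    fun (i : Fin r) (j : Fin k) => (⟨x.1 i j, by
      have h1 : a i * x.1 i j ≤ ∑ j', a i * x.1 i j' :=
        Finset.single_le_sum (f := fun j' => a i * x.1 i j') (fun _ _ => Nat.zero_le _)
          (Finset.mem_univ j)
      have h2 : ∑ j', a i * x.1 i j' ≤ ∑ i', ∑ j', a i' * x.1 i' j' :=
        Finset.single_le_sum (f := fun i' => ∑ j', a i' * x.1 i' j')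
          (fun _ _ => Nat.zero_le _) (Finset.mem_univ i)
      rw [x.2] at h2
      have h3 : x.1 i j ≤ a i * x.1 i j := Nat.le_mul_of_pos_left _ (ha i)
      omega⟩ : Fin (n + 1)))
  intro x y h
  apply Subtype.ext
  funext i j
  exact congrArg Fin.val (congrFun (congrFun h i) j)

lemma lower_bound (r k : ℕ) (hr : 1 ≤ r) (hk : 2 ≤ k) (a : Fin r → ℕ) (ha : ∀ i, 0 < a i)
    (D : ℕ) (hDpos : 0 < D) (haD : ∀ i, a i ∣ D) (N : ℕ) :
    ((N : ℚ) : ℚ) ^ (r * k - 1) ≤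
      (Nat.card {x : Fin r → Fin k → ℕ //
        ∑ i, ∑ j, a i * x i j = D * (r * k * N)} : ℚ) := by
  classical
  set i0 : Fin r := ⟨0, hr⟩ with hi0
  set j0 : Fin k := ⟨0, by omega⟩ with hj0
  set q0 : Fin r × Fin k := (i0, j0) with hq0
  set M : ℕ := r * k * N with hM
  -- domain
  set T := ({q : Fin r × Fin k // q ≠ q0} → Fin N) with hT
  have hcardsub : Fintype.card {q : Fin r × Fin k // q ≠ q0} = r * k - 1 := by
    have h1 : Fintype.card {q : Fin r × Fin k // ¬ q = q0} =
        Fintype.card (Fin r × Fin k) - Fintype.card {q : Fin r × Fin k // q = q0} :=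
      Fintype.card_subtype_compl _
    simpa [Fintype.card_subtype_eq] using h1
  have hcardT : Nat.card T = N ^ (r * k - 1) := by
    rw [hT, Nat.card_eq_fintype_card, Fintype.card_fun, Fintype.card_fin, hcardsub]
  -- sum of values bound
  have hS : ∀ v : T, (∑ q, (v q : ℕ)) ≤ M := by
    intro v
    have h1 : (∑ q, (v q : ℕ)) ≤ ∑ _q : {q : Fin r × Fin k // q ≠ q0}, N :=
      Finset.sum_le_sum (fun q _ => Nat.le_of_lt (v q).isLt)
    have h2 : (∑ _q : {q : Fin r × Fin k // q ≠ q0}, N) = (r * k - 1) * N := by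
      rw [Finset.sum_const, Finset.card_univ, hcardsub, smul_eq_mul]
    have h3 : (r * k - 1) * N ≤ r * k * N := Nat.mul_le_mul_right _ (Nat.sub_le _ _)
    omega
  -- the injection
  set φ : T → {x : Fin r → Fin k → ℕ // ∑ i, ∑ j, a i * x i j = D * M} := fun v =>
    ⟨fun i j => if h : (i, j) = q0 then (D / a i0) * (M - ∑ q, (v q : ℕ))
      else (D / a i) * (v ⟨(i, j), h⟩ : ℕ), by
      have hsum : (∑ i, ∑ j, a i * (fun i j => if h : (i, j) = q0 then
          (D / a i0) * (M - ∑ q, (v q : ℕ)) else (D / a i) * (v ⟨(i, j), h⟩ : ℕ)) i j)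
          = ∑ q : Fin r × Fin k, a q.1 * (if h : q = q0 then
            (D / a i0) * (M - ∑ q', (v q' : ℕ)) else (D / a q.1) * (v ⟨q, h⟩ : ℕ)) := by
        rw [Fintype.sum_prod_type]
      rw [hsum, Finset.sum_eq_add_sum_sdiff_singleton_of_mem (Finset.mem_univ q0)]
      have hq0term : a q0.1 * (if h : q0 = q0 then (D / a i0) * (M - ∑ q', (v q' : ℕ))
          else (D / a q0.1) * (v ⟨q0, h⟩ : ℕ)) = D * (M - ∑ q', (v q' : ℕ)) := by
        rw [dif_pos rfl, ← Nat.mul_assoc, Nat.mul_div_cancel' (haD i0)]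
      have hrest : (∑ q ∈ Finset.univ \ {q0}, a q.1 * (if h : q = q0 then
          (D / a i0) * (M - ∑ q', (v q' : ℕ)) else (D / a q.1) * (v ⟨q, h⟩ : ℕ)))
          = ∑ q : {q : Fin r × Fin k // q ≠ q0}, D * (v q : ℕ) := by
        rw [Finset.sum_subtype (Finset.univ \ {q0})
          (p := fun q : Fin r × Fin k => q ≠ q0) (by simp)]
        refine Finset.sum_congr rfl fun q _ => ?_
        rw [dif_neg q.2, ← Nat.mul_assoc, Nat.mul_div_cancel' (haD q.1.1)]
      rw [hq0term, hrest, ← Finset.mul_sum, ← Nat.mul_add,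
        Nat.sub_add_cancel (hS v)]⟩
  have hφinj : Function.Injective φ := by
    intro v v' h
    have h' := congrArg Subtype.val h
    funext q
    obtain ⟨⟨i, j⟩, hq⟩ := q
    have h2 := congrFun (congrFun h' i) j
    simp only [φ, dif_neg hq] at h2
    have hpos : 0 < D / a i := Nat.div_pos (Nat.le_of_dvd hDpos (haD i)) (ha i)
    exact Fin.val_injective (Nat.eq_of_mul_eq_mul_left hpos h2)
  haveI := orig_finite r k a ha (D * M)
  have hcard := Nat.card_le_card_of_injective φ hφinj
  rw [hcardT] at hcard
  calc ((N : ℚ)) ^ (r * k - 1) = ((N ^ (r * k - 1) : ℕ) : ℚ) := by push_cast; ring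
  _ ≤ _ := by exact_mod_cast hcard

end QP8

/-- `p_a^k(n)` is a quasi-polynomial of degree `rk-1` with period `D = lcm(a₁,…,a_r)`. -/
theorem stmt_8 (r k : ℕ) (hr : 1 ≤ r) (hk : 2 ≤ k) (a : Fin r → ℕ)
    (ha : ∀ i, 0 < a i) (D : ℕ) (hD : D = Finset.univ.lcm a) :
    ∃ d : ℕ → ℕ → ℚ,
      (∀ m n, d m (n + D) = d m n) ∧
      (∀ n, (Nat.card {x : Fin r → Fin k → ℕ // ∑ i, ∑ j, a i * x i j = n} : ℚ) =
        ∑ m ∈ Finset.range (r * k), d m n * (n : ℚ) ^ m) ∧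
      (∃ n, d (r * k - 1) n ≠ 0) := by
  classical
  have hs2 : 2 ≤ r * k := le_trans hk (Nat.le_mul_of_pos_left k hr)
  have hs1 : 1 ≤ r * k := by omega
  have haD : ∀ i, a i ∣ D := fun i => hD ▸ Finset.dvd_lcm (Finset.mem_univ i)
  have hDpos : 0 < D := by
    rcases Nat.eq_zero_or_pos D with h0 | h
    · exfalso
      rw [h0] at hD
      have h1 : Finset.univ.lcm a = 0 := hD.symm
      rw [Finset.lcm_eq_zero_iff] at h1
      obtain ⟨i, -, hi⟩ := h1
      exact (ha i).ne' hi
    · exact h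
  set e : Fin (r * k) ≃ Fin r × Fin k := finProdFinEquiv.symm with he
  set b : Fin (r * k) → ℕ := fun l => a (e l).1 with hb
  have hbpos : ∀ l, 0 < b l := fun l => ha _
  have hbdvd : ∀ l, b l ∣ D := fun l => haD _
  have hEquiv : ∀ n, {x : Fin r → Fin k → ℕ // ∑ i, ∑ j, a i * x i j = n} ≃
      QP8.sols (r * k) b n := by
    intro n
    refine Equiv.subtypeEquiv ((Equiv.curry (Fin r) (Fin k) ℕ).symm.trans
      (Equiv.arrowCongr e.symm (Equiv.refl ℕ))) fun x => ?_
    show (∑ i, ∑ j, a i * x i j = n) ↔ (∑ l, b l * x (e l).1 (e l).2 = n)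
    have h1 : (∑ q : Fin r × Fin k, a q.1 * x q.1 q.2) = ∑ i, ∑ j, a i * x i j :=
      Fintype.sum_prod_type (f := fun q : Fin r × Fin k => a q.1 * x q.1 q.2)
    have h2 : (∑ l, b l * x (e l).1 (e l).2) = ∑ q : Fin r × Fin k, a q.1 * x q.1 q.2 :=
      Fintype.sum_equiv e (fun l => b l * x (e l).1 (e l).2)
        (fun q => a q.1 * x q.1 q.2) (fun l => rfl)
    rw [h2, h1]
  have hcnt : ∀ n, (Nat.card {x : Fin r → Fin k → ℕ // ∑ i, ∑ j, a i * x i j = n} : ℚ)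
      = QP8.cnt (r * k) b n := by
    intro n
    have h3 := Nat.card_congr (hEquiv n)
    simp only [QP8.cnt]
    exact_mod_cast h3
  obtain ⟨d, hper, hsum', hmod⟩ := QP8.exists_qp D (r * k) hDpos hs1 (QP8.cnt (r * k) b)
    (QP8.cnt_fwd_iter D (r * k) hs1 b hbpos hbdvd)
  refine ⟨d, hper, fun n => by rw [hcnt n]; exact hsum' n, ?_⟩
  by_contra hcon
  push_neg at hcon
  set C : ℚ := ∑ c ∈ Finset.range D, ∑ m ∈ Finset.range (r * k), |d m c| with hC
  have hC0 : 0 ≤ C := Finset.sum_nonneg fun c _ => Finset.sum_nonneg fun m _ => abs_nonneg _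
  have habs : ∀ n : ℕ, (∑ m ∈ Finset.range (r * k), |d m n|) ≤ C := by
    intro n
    have h1 : (∑ m ∈ Finset.range (r * k), |d m n|)
        = ∑ m ∈ Finset.range (r * k), |d m (n % D)| :=
      Finset.sum_congr rfl fun m _ => by rw [hmod m n]
    rw [h1, hC]
    exact Finset.single_le_sum (f := fun c => ∑ m ∈ Finset.range (r * k), |d m c|)
      (fun c _ => Finset.sum_nonneg fun m _ => abs_nonneg _)
      (Finset.mem_range.mpr (Nat.mod_lt n hDpos))
  have hupper : ∀ n : ℕ, 1 ≤ n → QP8.cnt (r * k) b n ≤ C * (n : ℚ) ^ (r * k - 2) := by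
    intro n hn
    have hn1 : (1 : ℚ) ≤ (n : ℚ) := by exact_mod_cast hn
    rw [hsum' n]
    have hterm : ∀ m ∈ Finset.range (r * k),
        d m n * (n : ℚ) ^ m ≤ |d m n| * (n : ℚ) ^ (r * k - 2) := by
      intro m hm
      rcases eq_or_ne m (r * k - 1) with hm1 | hm1
      · rw [hm1, hcon n]
        simp
      · have hm2 : m ≤ r * k - 2 := by
          have := Finset.mem_range.mp hm
          omega
        calc d m n * (n : ℚ) ^ m ≤ |d m n| * (n : ℚ) ^ m :=
              mul_le_mul_of_nonneg_right (le_abs_self _) (by positivity)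
        _ ≤ |d m n| * (n : ℚ) ^ (r * k - 2) :=
              mul_le_mul_of_nonneg_left (pow_le_pow_right₀ hn1 hm2) (abs_nonneg _)
    calc ∑ m ∈ Finset.range (r * k), d m n * (n : ℚ) ^ m
        ≤ ∑ m ∈ Finset.range (r * k), |d m n| * (n : ℚ) ^ (r * k - 2) :=
          Finset.sum_le_sum hterm
    _ = (∑ m ∈ Finset.range (r * k), |d m n|) * (n : ℚ) ^ (r * k - 2) := by
          rw [Finset.sum_mul]
    _ ≤ C * (n : ℚ) ^ (r * k - 2) :=
          mul_le_mul_of_nonneg_right (habs n) (by positivity)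
  set B : ℚ := ((D * (r * k) : ℕ) : ℚ) with hB
  have hB0 : 0 ≤ B := Nat.cast_nonneg _
  obtain ⟨N, hN⟩ := exists_nat_gt (C * B ^ (r * k - 2))
  have hN0 : (0 : ℚ) < (N : ℚ) :=
    lt_of_le_of_lt (mul_nonneg hC0 (pow_nonneg hB0 _)) hN
  have hNpos : 0 < N := by exact_mod_cast hN0
  have hnpos : 0 < D * (r * k * N) := Nat.mul_pos hDpos (Nat.mul_pos (by omega) hNpos)
  have hlow := QP8.lower_bound r k hr hk a ha D hDpos haD N
  rw [hcnt (D * (r * k * N))] at hlow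
  have hup := hupper (D * (r * k * N)) hnpos
  have hcast : ((D * (r * k * N) : ℕ) : ℚ) = B * (N : ℚ) := by
    rw [hB]
    push_cast
    ring
  have e1 : ((N : ℚ)) ^ (r * k - 1) = (N : ℚ) * (N : ℚ) ^ (r * k - 2) := by
    have h4 : r * k - 1 = (r * k - 2) + 1 := by omega
    rw [h4, pow_succ']
  have key : (N : ℚ) * (N : ℚ) ^ (r * k - 2) ≤ (C * B ^ (r * k - 2)) * (N : ℚ) ^ (r * k - 2) := by
    calc (N : ℚ) * (N : ℚ) ^ (r * k - 2) = ((N : ℚ)) ^ (r * k - 1) := e1.symm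
    _ ≤ QP8.cnt (r * k) b (D * (r * k * N)) := hlow
    _ ≤ C * ((D * (r * k * N) : ℕ) : ℚ) ^ (r * k - 2) := hup
    _ = (C * B ^ (r * k - 2)) * (N : ℚ) ^ (r * k - 2) := by
          rw [hcast, mul_pow]
          ring
  have hNpow : (0 : ℚ) < (N : ℚ) ^ (r * k - 2) := by positivity
  have hfin := le_of_mul_le_mul_right key hNpow
  linarith
end

section
/- For any integer m > 1, the lower asymptotic density of the set {n ≥ 0 : p_a^k(n) ≢ 0 (mod m)} is at least 1/(k·(a_1 + ⋯ + a_r)); i.e., liminf_{N→∞} #{n ≤ N : m ∤ p_a^k(n)}/N ≥ 1/(k Σ_{i=1}^r a_i). -/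
open PowerSeries Finset

section
variable (r k : ℕ) (a : Fin r → ℕ)

noncomputable def mpc (n : ℕ) : ℕ :=
  Nat.card {x : Fin r → Fin k → ℕ // ∑ i, ∑ j, a i * x i j = n}

def mpA (n : ℕ) : Finset ((Fin r × Fin k) →₀ ℕ) :=
  (Finset.finsuppAntidiag Finset.univ n).filter (fun l => ∀ t, a t.1 ∣ l t)

theorem mem_mpA {n : ℕ} {l : (Fin r × Fin k) →₀ ℕ} :
    l ∈ mpA r k a n ↔ (∑ t : Fin r × Fin k, l t) = n ∧ ∀ t, a t.1 ∣ l t := by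
  simp [mpA, Finset.mem_finsuppAntidiag, Finset.sum_apply']

theorem mpc_eq (ha : ∀ i, 0 < a i) (n : ℕ) : mpc r k a n = (mpA r k a n).card := by
  rw [← Nat.card_eq_finsetCard]
  apply Nat.card_congr
  have key : ∀ x : Fin r → Fin k → ℕ, (∑ i, ∑ j, a i * x i j = n) →
      Finsupp.equivFunOnFinite.symm (fun t : Fin r × Fin k => a t.1 * x t.1 t.2)
        ∈ mpA r k a n := by
    intro x hx
    rw [mem_mpA]
    constructor
    · simp only [Finsupp.coe_equivFunOnFinite_symm]
      rw [Fintype.sum_prod_type]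
      exact hx
    · intro t
      simp only [Finsupp.coe_equivFunOnFinite_symm]
      exact ⟨x t.1 t.2, rfl⟩
  have key2 : ∀ l : (Fin r × Fin k) →₀ ℕ, l ∈ mpA r k a n →
      ∑ i, ∑ j, a i * (l (i, j) / a i) = n := by
    intro l hl
    rw [mem_mpA] at hl
    rw [← hl.1, Fintype.sum_prod_type]
    exact Finset.sum_congr rfl (fun i _ => Finset.sum_congr rfl
      (fun j _ => Nat.mul_div_cancel' (hl.2 (i, j))))
  refine ⟨fun x => ⟨_, key x.1 x.2⟩, fun l => ⟨fun i j => l.1 (i, j) / a i, key2 l.1 l.2⟩,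
    ?_, ?_⟩
  · rintro ⟨x, hx⟩
    simp only [Subtype.mk.injEq]
    funext i j
    simp only [Finsupp.coe_equivFunOnFinite_symm]
    exact Nat.mul_div_cancel_left _ (ha i)
  · rintro ⟨l, hl⟩
    rw [mem_mpA] at hl
    simp only [Subtype.mk.injEq]
    ext t
    simp only [Finsupp.coe_equivFunOnFinite_symm]
    exact Nat.mul_div_cancel' (hl.2 t)
end

noncomputable def Gs (d : ℕ) : PowerSeries ℤ :=
  PowerSeries.mk fun n => if d ∣ n then 1 else 0

theorem one_sub_X_pow_mul_Gs (d : ℕ) (hd : 0 < d) :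
    (1 - PowerSeries.X ^ d) * Gs d = 1 := by
  ext n
  rw [sub_mul, one_mul, map_sub, PowerSeries.coeff_X_pow_mul', Gs, PowerSeries.coeff_mk]
  rcases Nat.eq_zero_or_pos n with rfl | hn
  · simp [hd.ne']
  · rw [PowerSeries.coeff_one, if_neg hn.ne']
    by_cases h : d ∣ n
    · rw [if_pos h, if_pos (Nat.le_of_dvd hn h), PowerSeries.coeff_mk,
        if_pos ((Nat.dvd_sub h dvd_rfl))]
      ring
    · rw [if_neg h]
      split_ifs with h2
      · rw [PowerSeries.coeff_mk, if_neg, sub_zero]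
        intro hdvd
        have := Nat.dvd_add hdvd (dvd_refl d)
        rw [Nat.sub_add_cancel h2] at this
        exact h this
      · simp

section
variable (r k : ℕ) (a : Fin r → ℕ)

noncomputable def Fs : PowerSeries ℤ := PowerSeries.mk fun n => (mpc r k a n : ℤ)

theorem Fs_eq (ha : ∀ i, 0 < a i) :
    Fs r k a = ∏ i : Fin r, (Gs (a i)) ^ k := by
  have : ∏ i : Fin r, (Gs (a i)) ^ k = ∏ t : Fin r × Fin k, Gs (a t.1) := by
    rw [Fintype.prod_prod_type]
    exact Finset.prod_congr rfl fun i _ => by simp [Finset.prod_const]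
  rw [this]
  ext n
  rw [Fs, PowerSeries.coeff_mk, PowerSeries.coeff_prod, mpc_eq r k a ha n]
  have : ∀ l ∈ Finset.finsuppAntidiag (Finset.univ : Finset (Fin r × Fin k)) n,
      (∏ t : Fin r × Fin k, PowerSeries.coeff (l t) (Gs (a t.1))) =
      if (∀ t : Fin r × Fin k, a t.1 ∣ l t) then 1 else 0 := by
    intro l _
    rw [← Fintype.prod_boole]
    exact Finset.prod_congr rfl fun t _ => by rw [Gs, PowerSeries.coeff_mk]
  rw [Finset.sum_congr rfl this, Finset.sum_boole, mpA]
end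

section
variable (r k : ℕ) (a : Fin r → ℕ)

noncomputable def Qp : Polynomial ℤ := ∏ i : Fin r, (1 - Polynomial.X ^ (a i)) ^ k

theorem Qp_coe : ((Qp r k a : Polynomial ℤ) : PowerSeries ℤ) =
    ∏ i : Fin r, (1 - PowerSeries.X ^ (a i)) ^ k := by
  rw [Qp, ← Polynomial.coeToPowerSeries.ringHom_apply, map_prod]
  exact Finset.prod_congr rfl fun i _ => by
    rw [map_pow, map_sub, map_one, map_pow, Polynomial.coeToPowerSeries.ringHom_apply,
      Polynomial.coe_X]

theorem Qp_mul_Fs (ha : ∀ i, 0 < a i) :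
    ((Qp r k a : Polynomial ℤ) : PowerSeries ℤ) * Fs r k a = 1 := by
  rw [Qp_coe, Fs_eq r k a ha, ← Finset.prod_mul_distrib]
  rw [Finset.prod_congr rfl (fun i _ => by
    rw [← mul_pow, one_sub_X_pow_mul_Gs (a i) (ha i), one_pow] :
      ∀ i ∈ Finset.univ, (1 - PowerSeries.X ^ (a i)) ^ k * Gs (a i) ^ k = 1)]
  simp

theorem one_sub_X_pow_ne (d : ℕ) (hd : 0 < d) :
    (1 - Polynomial.X ^ d : Polynomial ℤ) ≠ 0 := fun h => by
  have := congrArg (Polynomial.coeff · 0) h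
  simpa [Polynomial.coeff_X_pow, hd.ne] using this

theorem Qp_natDegree (ha : ∀ i, 0 < a i) :
    (Qp r k a).natDegree = ∑ i, k * a i := by
  rw [Qp, Polynomial.natDegree_prod _ _
    (fun i _ => pow_ne_zero _ (one_sub_X_pow_ne _ (ha i)))]
  apply Finset.sum_congr rfl
  intro i _
  rw [Polynomial.natDegree_pow]
  congr 1
  have : (1 - Polynomial.X ^ (a i) : Polynomial ℤ) = -(Polynomial.X ^ (a i) - Polynomial.C 1) := by
    simp
  rw [this, Polynomial.natDegree_neg, Polynomial.natDegree_X_pow_sub_C]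

theorem Qp_leading (ha : ∀ i, 0 < a i) :
    IsUnit ((Qp r k a).coeff (∑ i, k * a i)) := by
  rw [← Qp_natDegree r k a ha, Polynomial.coeff_natDegree, Qp, Polynomial.leadingCoeff_prod]
  refine Finset.prod_induction _ IsUnit (fun _ _ => IsUnit.mul) isUnit_one fun i _ => ?_
  rw [Polynomial.leadingCoeff_pow]
  have : (1 - Polynomial.X ^ (a i) : Polynomial ℤ) = -(Polynomial.X ^ (a i) - Polynomial.C 1) := by
    simp
  rw [this, Polynomial.leadingCoeff_neg,
    (Polynomial.monic_X_pow_sub_C _ (ha i).ne').leadingCoeff]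
  exact (IsUnit.neg isUnit_one).pow k

theorem Qp_coeff_zero (ha : ∀ i, 0 < a i) {j : ℕ} (hj : (∑ i, k * a i) < j) :
    (Qp r k a).coeff j = 0 :=
  Polynomial.coeff_eq_zero_of_natDegree_lt (by rw [Qp_natDegree r k a ha]; exact hj)
end

section
variable (r k : ℕ) (a : Fin r → ℕ)

theorem recurrence (ha : ∀ i, 0 < a i) (n : ℕ) (hn : 0 < n) :
    ∑ p ∈ Finset.HasAntidiagonal.antidiagonal n, (Qp r k a).coeff p.1 * (mpc r k a p.2 : ℤ) = 0 := by
  have h := congrArg (PowerSeries.coeff n) (Qp_mul_Fs r k a ha)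
  rw [PowerSeries.coeff_mul, PowerSeries.coeff_one, if_neg hn.ne'] at h
  simpa [Polynomial.coeff_coe, Fs] using h

theorem mpc_zero (ha : ∀ i, 0 < a i) : mpc r k a 0 = 1 := by
  rw [mpc, Nat.card_eq_one_iff_unique]
  constructor
  · constructor
    rintro ⟨x, hx⟩ ⟨y, hy⟩
    have hz : ∀ z : Fin r → Fin k → ℕ, (∑ i, ∑ j, a i * z i j = 0) → z = fun _ _ => 0 := by
      intro z hzz
      funext i j
      have h1 := (Finset.sum_eq_zero_iff).1 hzz i (Finset.mem_univ i)
      have h2 := (Finset.sum_eq_zero_iff).1 h1 j (Finset.mem_univ j)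
      exact Nat.mul_eq_zero.1 h2 |>.resolve_left (ha i).ne'
    simp [Subtype.ext_iff, hz x hx, hz y hy]
  · exact ⟨⟨fun _ _ => 0, by simp⟩⟩

theorem key_dvd (ha : ∀ i, 0 < a i) (m : ℕ) (t : ℕ)
    (hbad : ∀ n, t < n → n ≤ t + ∑ i, k * a i → m ∣ mpc r k a n) (hD : 0 < ∑ i, k * a i) :
    (m : ℤ) ∣ (Qp r k a).coeff (∑ i, k * a i) * (mpc r k a t : ℤ) := by
  set D := ∑ i, k * a i with hDdef
  have h := recurrence r k a ha (t + D) (by omega)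
  have hmem : ((D : ℕ), t) ∈ Finset.HasAntidiagonal.antidiagonal (t + D) := by
    simp [add_comm]
  rw [← Finset.add_sum_erase _ _ hmem] at h
  have hrest : (m : ℤ) ∣ ∑ p ∈ (Finset.HasAntidiagonal.antidiagonal (t + D)).erase (D, t),
      (Qp r k a).coeff p.1 * (mpc r k a p.2 : ℤ) := by
    apply Finset.dvd_sum
    rintro ⟨u, v⟩ hp
    have huv : u + v = t + D := Finset.HasAntidiagonal.mem_antidiagonal.1 (Finset.mem_of_mem_erase hp)
    have hne : (u, v) ≠ (D, t) := Finset.ne_of_mem_erase hp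
    rcases lt_trichotomy u D with hu | rfl | hu
    · have hv1 : t < v := by omega
      have hv2 : v ≤ t + D := by omega
      have := hbad v hv1 hv2
      exact Dvd.dvd.mul_left (Int.natCast_dvd_natCast.2 this) _
    · exfalso; exact hne (by simp; omega)
    · rw [Qp_coeff_zero r k a ha hu, zero_mul]
      exact dvd_zero _
  have : (Qp r k a).coeff D * (mpc r k a t : ℤ) =
      -∑ p ∈ (Finset.HasAntidiagonal.antidiagonal (t + D)).erase (D, t),
      (Qp r k a).coeff p.1 * (mpc r k a p.2 : ℤ) := by linarith
  rw [this]
  exact hrest.neg_right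

theorem no_bad (ha : ∀ i, 0 < a i) (m : ℕ) (hm : 1 < m) (hD : 0 < ∑ i, k * a i) (t : ℕ) :
    ∃ n, t < n ∧ n ≤ t + ∑ i, k * a i ∧ ¬ m ∣ mpc r k a n := by
  set D := ∑ i, k * a i with hDdef
  by_contra hcon
  push_neg at hcon
  have hbad : ∀ n, t < n → n ≤ t + D → m ∣ mpc r k a n := fun n h1 h2 => hcon n h1 h2
  have hstep : ∀ s : ℕ, (∀ n, s < n → n ≤ s + D → m ∣ mpc r k a n) →
      (m : ℤ) ∣ (mpc r k a s : ℤ) ∧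
      (0 < s → ∀ n, s - 1 < n → n ≤ s - 1 + D → m ∣ mpc r k a n) := by
    intro s hs
    have hd := key_dvd r k a ha m s hs hD
    have hu := Qp_leading r k a ha
    have hdc : (m : ℤ) ∣ (mpc r k a s : ℤ) := by
      rcases Int.isUnit_iff.1 hu with h1 | h1 <;> rw [h1] at hd <;> simpa using hd
    refine ⟨hdc, fun hs0 n h1 h2 => ?_⟩
    rcases eq_or_lt_of_le (Nat.succ_le_of_lt h1) with h3 | h3
    · have : n = s := by omega
      rw [this]
      exact_mod_cast Int.natCast_dvd_natCast.1 hdc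
    · exact hs n (by omega) (by omega)
  have hall : ∀ j, ∀ n, (t - j) < n → n ≤ (t - j) + D → m ∣ mpc r k a n := by
    intro j
    induction j with
    | zero => simpa using hbad
    | succ j ih =>
      rcases Nat.eq_zero_or_pos (t - j) with h0 | h0
      · have : t - (j + 1) = t - j := by omega
        rw [this]; exact ih
      · have := (hstep (t - j) ih).2 h0
        have heq : t - (j + 1) = t - j - 1 := by omega
        rw [heq]; exact this
  have h0 : ∀ n, 0 < n → n ≤ D → m ∣ mpc r k a n := by
    have := hall t
    simpa using this
  have := (hstep 0 (fun n h1 h2 => h0 n h1 (by omega))).1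
  rw [mpc_zero r k a ha] at this
  have : (m : ℤ) ∣ 1 := by simpa using this
  have := Int.le_of_dvd one_pos this
  omega
end

section
variable (r k : ℕ) (a : Fin r → ℕ)

theorem count_ge (ha : ∀ i, 0 < a i) (m : ℕ) (hm : 1 < m) (hD : 0 < ∑ i, k * a i) (N : ℕ) :
    N / (∑ i, k * a i) ≤ Nat.card {n : ℕ // n ≤ N ∧ ¬ m ∣ mpc r k a n} := by
  classical
  set D := ∑ i, k * a i with hDdef
  choose w hw1 hw2 hw3 using no_bad r k a ha m hm hD
  have hfin : Finite {n : ℕ // n ≤ N ∧ ¬ m ∣ mpc r k a n} := by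
    have hsub : {n : ℕ | n ≤ N ∧ ¬ m ∣ mpc r k a n} ⊆ Set.Iic N := fun n hn => hn.1
    exact ((Set.finite_Iic N).subset hsub).to_subtype
  have hb : ∀ t : Fin (N / D), w (t.1 * D) ≤ N ∧ ¬ m ∣ mpc r k a (w (t.1 * D)) := by
    intro t
    refine ⟨?_, hw3 _⟩
    have h1 := hw2 (t.1 * D)
    rw [← hDdef] at h1
    have h2 : (t.1 + 1) * D ≤ (N / D) * D := Nat.mul_le_mul_right _ t.2
    have h3 : (N / D) * D ≤ N := Nat.div_mul_le_self N D
    nlinarith [h1, h2, h3]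
  have hinj : Function.Injective
      (fun t : Fin (N / D) => (⟨w (t.1 * D), (hb t).1, (hb t).2⟩ :
        {n : ℕ // n ≤ N ∧ ¬ m ∣ mpc r k a n})) := by
    intro t1 t2 h
    simp only [Subtype.mk.injEq] at h
    by_contra hne
    have key : ∀ s1 s2 : Fin (N / D), s1.1 < s2.1 → False ∨
        w (s1.1 * D) < w (s2.1 * D) := by
      intro s1 s2 hlt
      right
      have h1 := hw2 (s1.1 * D)
      rw [← hDdef] at h1
      have h2 := hw1 (s2.1 * D)
      have h3 : (s1.1 + 1) * D ≤ s2.1 * D := Nat.mul_le_mul_right _ hlt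
      nlinarith
    rcases Fin.lt_or_lt_of_ne hne with hlt | hlt
    · rcases key t1 t2 hlt with h' | h'
      · exact h'
      · omega
    · rcases key t2 t1 hlt with h' | h'
      · exact h'
      · omega
  have := Nat.card_le_card_of_injective _ hinj
  simpa using this
end

/-- Lower bound for the density of `{n : p_a^k(n) ≢ 0 (mod m)}`. -/
theorem stmt_11 (r k : ℕ) (hr : 1 ≤ r) (hk : 2 ≤ k) (a : Fin r → ℕ)
    (ha : ∀ i, 0 < a i) (m : ℕ) (hm : 1 < m) :
    (1 : ℝ) / (k * ∑ i, (a i : ℝ)) ≤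
      Filter.liminf (fun N : ℕ =>
        (Nat.card {n : ℕ // n ≤ N ∧
          ¬ (m ∣ Nat.card {x : Fin r → Fin k → ℕ // ∑ i, ∑ j, a i * x i j = n})} : ℝ)
          / (N : ℝ))
        Filter.atTop := by
  classical
  set D : ℕ := ∑ i, k * a i with hDdef
  have hD : 0 < D := by
    rw [hDdef]
    apply Finset.sum_pos (fun i _ => Nat.mul_pos (by omega) (ha i))
    exact ⟨⟨0, hr⟩, Finset.mem_univ _⟩
  have hDr0 : (0 : ℝ) < (D : ℝ) := by exact_mod_cast hD
  have hDr : ((k : ℝ) * ∑ i, (a i : ℝ)) = (D : ℝ) := by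
    rw [hDdef, Finset.mul_sum]
    push_cast
    ring
  set u : ℕ → ℝ := fun N =>
    (Nat.card {n : ℕ // n ≤ N ∧
      ¬ (m ∣ Nat.card {x : Fin r → Fin k → ℕ // ∑ i, ∑ j, a i * x i j = n})} : ℝ) / (N : ℝ)
    with hu
  have hcount : ∀ N : ℕ, ((N / D : ℕ) : ℝ) ≤
      (Nat.card {n : ℕ // n ≤ N ∧
        ¬ (m ∣ Nat.card {x : Fin r → Fin k → ℕ // ∑ i, ∑ j, a i * x i j = n})} : ℝ) := by
    intro N
    exact_mod_cast count_ge r k a ha m hm hD N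
  have hubound : ∀ N : ℕ, 1 ≤ N → u N ≤ 2 := by
    intro N hN
    have hc : Nat.card {n : ℕ // n ≤ N ∧
        ¬ (m ∣ Nat.card {x : Fin r → Fin k → ℕ // ∑ i, ∑ j, a i * x i j = n})} ≤ N + 1 := by
      have hinj : Function.Injective (fun x : {n : ℕ // n ≤ N ∧
          ¬ (m ∣ Nat.card {x : Fin r → Fin k → ℕ // ∑ i, ∑ j, a i * x i j = n})} =>
          (⟨x.1, Nat.lt_succ_of_le x.2.1⟩ : Fin (N + 1))) := by
        intro x y h
        simp only [Fin.mk.injEq] at h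
        exact Subtype.ext h
      have := Nat.card_le_card_of_injective _ hinj
      simpa using this
    rw [hu]
    have hN0 : (0 : ℝ) < (N : ℝ) := by exact_mod_cast hN
    rw [div_le_iff₀ hN0]
    have : ((N : ℝ) + 1) ≤ 2 * N := by
      have : (1 : ℝ) ≤ N := by exact_mod_cast hN
      linarith
    calc (Nat.card _ : ℝ) ≤ (N : ℝ) + 1 := by exact_mod_cast hc
      _ ≤ 2 * N := this
  have hev : ∀ᶠ N in Filter.atTop, (1 : ℝ) / D - 1 / N ≤ u N := by
    filter_upwards [Filter.eventually_ge_atTop 1] with N hN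
    have hN0 : (0 : ℝ) < (N : ℝ) := by exact_mod_cast hN
    have h1 : (N : ℝ) / D - 1 ≤ ((N / D : ℕ) : ℝ) := by
      rw [sub_le_iff_le_add, div_le_iff₀ hDr0]
      have e1 : (N : ℝ) = D * ((N / D : ℕ) : ℝ) + ((N % D : ℕ) : ℝ) := by
        exact_mod_cast (Nat.div_add_mod N D).symm
      have e2 : ((N % D : ℕ) : ℝ) < D := by exact_mod_cast Nat.mod_lt N hD
      nlinarith
    have step1 : (1 : ℝ) / D - 1 / N = ((N : ℝ) / D - 1) / N := by
      field_simp
    rw [step1, hu]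
    have step2 : ((N : ℝ) / D - 1) / N ≤ ((N / D : ℕ) : ℝ) / N :=
      by apply div_le_div_of_nonneg_right h1 hN0.le
    refine step2.trans (by apply div_le_div_of_nonneg_right (hcount N) hN0.le)
  have hlim : Filter.Tendsto (fun N : ℕ => (1 : ℝ) / D - 1 / N) Filter.atTop
      (nhds ((1 : ℝ) / D)) := by
    have h2 := tendsto_one_div_atTop_nhds_zero_nat (𝕜 := ℝ)
    simpa using (tendsto_const_nhds (x := (1 : ℝ) / D) (f := Filter.atTop)).sub h2
  have : (1 : ℝ) / ((k : ℝ) * ∑ i, (a i : ℝ)) = (1 : ℝ) / D := by rw [hDr]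
  rw [this, ← hlim.liminf_eq]
  have hdiv : ∀ x y : ℝ, x ≤ y → ∀ c : ℝ, 0 < c → x / c ≤ y / c := fun x y h c hc => by
    apply div_le_div_of_nonneg_right h hc.le
  refine Filter.liminf_le_liminf hev ?_ ?_
  · apply Filter.isBoundedUnder_of
    refine ⟨1 / D - 1, fun N => ?_⟩
    have : (1 : ℝ) / N ≤ 1 := by
      rcases Nat.eq_zero_or_pos N with rfl | h
      · simp
      · rw [div_le_one (by exact_mod_cast h)]
        exact_mod_cast h
    simp only [ge_iff_le]
    linarith
  · apply Filter.isCoboundedUnder_ge_of_eventually_le Filter.atTop (x := 2)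
    filter_upwards [Filter.eventually_ge_atTop 1] with N hN
    exact hubound N hN
end
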